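/- arXiv:1309.7109 — 7 statements merged into one kernel-verified Lean document; each statement's English description precedes it below -/
import Mathlib

section
/- For a differentiable strictly convex function F : ℝ → ℝ, the limit as α → 0 of (1/(α(1-α))) J'_α(p:q) equals the Bregman divergence B(p:q) = F(p) - F(q) - (p-q)F'(q). -/
open Filter Topology

/-- As α → 0⁺, the scaled skew Jensen divergence tends to the Bregman divergence B(p:q). -/
theorem skew_jensen_tendsto_bregman_zero
    (F : ℝ → ℝ) (hF : StrictConvexOn ℝ Set.univ F) (hdiff : Differentiable ℝ F)
    (p q : ℝ) :
    Tendsto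
      (fun α : ℝ => (1 / (α * (1 - α))) *
        (α * F p + (1 - α) * F q - F (α * p + (1 - α) * q)))
      (𝓝[Set.Ioo (0 : ℝ) 1] 0)
      (𝓝 (F p - F q - (p - q) * deriv F q)) := by
  set g : ℝ → ℝ := fun α => F (α * p + (1 - α) * q) with hg
  have hinner : HasDerivAt (fun α : ℝ => α * p + (1 - α) * q) (p - q) 0 := by
    have : HasDerivAt (fun α : ℝ => α * p + (1 - α) * q) (1 * p + (0 - 1) * q) 0 := by
      exact ((hasDerivAt_id 0).mul_const p).add
        (((hasDerivAt_const 0 (1:ℝ)).sub (hasDerivAt_id 0)).mul_const q)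
    convert this using 1
    ring
  have hgd : HasDerivAt g ((p - q) * deriv F q) 0 := by
    have h1 : HasDerivAt F (deriv F q) ((0:ℝ) * p + (1 - 0) * q) := by
      simpa using (hdiff ((0:ℝ) * p + (1 - 0) * q)).hasDerivAt
    have h2 := h1.comp 0 hinner
    rw [mul_comm]
    exact h2
  have hslope : Tendsto (slope g 0) (𝓝[Set.Ioo (0:ℝ) 1] 0) (𝓝 ((p - q) * deriv F q)) := by
    have := hasDerivAt_iff_tendsto_slope.mp hgd
    exact this.mono_left (nhdsWithin_mono 0 (fun x hx => ne_of_gt hx.1))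
  have hinv : Tendsto (fun α : ℝ => 1 / (1 - α)) (𝓝[Set.Ioo (0:ℝ) 1] 0) (𝓝 1) := by
    have : Tendsto (fun α : ℝ => 1 / (1 - α)) (𝓝 0) (𝓝 (1 / (1 - 0))) := by
      apply Tendsto.div tendsto_const_nhds (tendsto_const_nhds.sub tendsto_id)
      norm_num
    simpa using this.mono_left nhdsWithin_le_nhds
  have hmain : Tendsto (fun α : ℝ => (1 / (1 - α)) * ((F p - F q) - slope g 0 α))
      (𝓝[Set.Ioo (0:ℝ) 1] 0) (𝓝 (F p - F q - (p - q) * deriv F q)) := by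
    have := hinv.mul ((tendsto_const_nhds (x := F p - F q)).sub hslope)
    simpa using this
  refine hmain.congr' ?_
  filter_upwards [self_mem_nhdsWithin] with α hα
  have hα0 : α ≠ 0 := ne_of_gt hα.1
  have hα1 : (1:ℝ) - α ≠ 0 := by linarith [hα.2]
  have hg0 : g 0 = F q := by simp [hg]
  rw [slope_def_field]
  simp only [hg0]
  field_simp
  ring
end

section
/- For a differentiable strictly convex function F : ℝ → ℝ, the limit as α → 1 of (1/(α(1-α))) J'_α(p:q) equals the reverse Bregman divergence B(q:p) = F(q) - F(p) - (q-p)F'(p). -/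
open Filter Topology

/-- As α → 1⁻, the scaled skew Jensen divergence tends to the reverse Bregman divergence B(q:p). -/
theorem skew_jensen_tendsto_bregman_one
    (F : ℝ → ℝ) (hF : StrictConvexOn ℝ Set.univ F) (hdiff : Differentiable ℝ F)
    (p q : ℝ) :
    Tendsto
      (fun α : ℝ => (1 / (α * (1 - α))) *
        (α * F p + (1 - α) * F q - F (α * p + (1 - α) * q)))
      (𝓝[Set.Ioo (0 : ℝ) 1] 1)
      (𝓝 (F q - F p - (q - p) * deriv F p)) := by
  set L := (q - p) * deriv F p with hLdef
  set g : ℝ → ℝ := fun t => F (p + t * (q - p)) with hgdef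
  have hg : HasDerivAt g L 0 := by
    have h1 : HasDerivAt (fun t : ℝ => p + t * (q - p)) (q - p) 0 := by
      simpa using ((hasDerivAt_id (0 : ℝ)).mul_const (q - p)).const_add p
    have h2 := (hdiff (p + 0 * (q - p))).hasDerivAt
    have := h2.comp 0 h1
    simpa [hgdef, hLdef, mul_comm, Function.comp_def] using this
  have hslope : Tendsto (slope g 0) (𝓝[≠] (0 : ℝ)) (𝓝 L) :=
    hasDerivAt_iff_tendsto_slope.mp hg
  have hmap : Tendsto (fun α : ℝ => 1 - α) (𝓝[Set.Ioo (0 : ℝ) 1] 1) (𝓝[≠] (0 : ℝ)) := by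
    rw [tendsto_nhdsWithin_iff]
    constructor
    · have h0 : Tendsto (fun α : ℝ => 1 - α) (𝓝 1) (𝓝 (1 - 1)) :=
        tendsto_const_nhds.sub tendsto_id
      rw [sub_self] at h0
      exact h0.mono_left nhdsWithin_le_nhds
    · filter_upwards [self_mem_nhdsWithin] with α hα
      simp only [Set.mem_compl_iff, Set.mem_singleton_iff]
      exact sub_ne_zero.mpr (ne_of_gt hα.2)
  have hinv : Tendsto (fun α : ℝ => 1 / α) (𝓝[Set.Ioo (0 : ℝ) 1] 1) (𝓝 1) := by
    have : Tendsto (fun α : ℝ => 1 / α) (𝓝 (1 : ℝ)) (𝓝 (1 / 1)) :=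
      (continuousAt_const.div continuousAt_id one_ne_zero)
    simpa using this.mono_left nhdsWithin_le_nhds
  have hmain : Tendsto (fun α : ℝ => (1 / α) * (F q - F p - slope g 0 (1 - α)))
      (𝓝[Set.Ioo (0 : ℝ) 1] 1) (𝓝 (1 * (F q - F p - L))) :=
    hinv.mul (tendsto_const_nhds.sub (hslope.comp hmap))
  have heq : (fun α : ℝ => (1 / (α * (1 - α))) *
        (α * F p + (1 - α) * F q - F (α * p + (1 - α) * q)))
      =ᶠ[𝓝[Set.Ioo (0 : ℝ) 1] 1]
      (fun α : ℝ => (1 / α) * (F q - F p - slope g 0 (1 - α))) := by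
    filter_upwards [self_mem_nhdsWithin] with α hα
    have hα0 : α ≠ 0 := ne_of_gt hα.1
    have hα1 : (1 : ℝ) - α ≠ 0 := sub_ne_zero.mpr (ne_of_gt hα.2)
    have harg : p + (1 - α) * (q - p) = α * p + (1 - α) * q := by ring
    rw [slope_def_field]
    simp only [hgdef, sub_zero, mul_zero, add_zero]
    rw [harg]
    field_simp
    ring
  rw [one_mul] at hmain
  exact hmain.congr' heq.symm
end

section
/- The Euclidean distance from the point ((pq)_α, F((pq)_α)) to the line through (p, F(p)) and (q, F(q)) in ℝ^{d+1} equals ρ_J(p,q)·J'_α(p:q), where ρ_J(p,q) = 1/√(1 + (F(p)-F(q))²/‖p-q‖²) and J'_α(p:q) = αF(p)+(1-α)F(q)-F(αp+(1-α)q). -/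
open RealInnerProductSpace

lemma infDist_affineSpan_pair_eq {E : Type*} [NormedAddCommGroup E] [InnerProductSpace ℝ E]
    (x A B y : E) (hy : y ∈ affineSpan ℝ {A, B})
    (horth : ⟪x - y, A - B⟫ = 0) :
    Metric.infDist x ((affineSpan ℝ {A, B} : AffineSubspace ℝ E) : Set E) = dist x y := by
  have key : ∀ z ∈ (affineSpan ℝ {A, B} : Set E), dist x y ≤ dist x z := by
    intro z hz
    have hdir : z -ᵥ y ∈ (affineSpan ℝ {A, B}).direction :=
      AffineSubspace.vsub_mem_direction hz hy
    rw [direction_affineSpan, vectorSpan_pair] at hdir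
    obtain ⟨t, ht⟩ := Submodule.mem_span_singleton.1 hdir
    have hzy : z - y = t • (A - B) := by
      simpa [vsub_eq_sub] using ht.symm
    have hinner : ⟪x - y, z - y⟫ = 0 := by
      rw [hzy, real_inner_smul_right, horth, mul_zero]
    have hsq : ‖x - y‖ ^ 2 ≤ ‖x - z‖ ^ 2 := by
      have hxz : x - z = (x - y) - (z - y) := by abel
      have hexp := norm_sub_sq_real (x - y) (z - y)
      rw [hinner] at hexp
      rw [hxz]
      nlinarith [sq_nonneg ‖z - y‖]
    rw [dist_eq_norm, dist_eq_norm]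
    calc ‖x - y‖ = Real.sqrt (‖x - y‖ ^ 2) := (Real.sqrt_sq (norm_nonneg _)).symm
      _ ≤ Real.sqrt (‖x - z‖ ^ 2) := Real.sqrt_le_sqrt hsq
      _ = ‖x - z‖ := Real.sqrt_sq (norm_nonneg _)
  refine le_antisymm (Metric.infDist_le_dist_of_mem hy) ?_
  by_contra h
  push_neg at h
  obtain ⟨z, hz, hlt⟩ := (Metric.infDist_lt_iff ⟨y, hy⟩).1 h
  exact absurd hlt (not_lt.2 (key z hz))

/-- The Euclidean distance from ((pq)_α, F((pq)_α)) to the line through (p,F(p)) and (q,F(q))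
equals ρ_J(p,q) · J'_α(p:q). -/
theorem total_jensen_as_dist_to_chord
    (d : ℕ) (F : EuclideanSpace ℝ (Fin d) → ℝ)
    (hF : ConvexOn ℝ Set.univ F)
    (p q : EuclideanSpace ℝ (Fin d)) (hpq : p ≠ q)
    (α : ℝ) (hα : α ∈ Set.Ioo (0 : ℝ) 1) :
    let pt : EuclideanSpace ℝ (Fin d) × ℝ → WithLp 2 (EuclideanSpace ℝ (Fin d) × ℝ) :=
      (WithLp.equiv 2 (EuclideanSpace ℝ (Fin d) × ℝ)).symm
    let m : EuclideanSpace ℝ (Fin d) := α • p + (1 - α) • q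
    Metric.infDist (pt (m, F m))
        (↑(affineSpan ℝ {pt (p, F p), pt (q, F q)}) : Set (WithLp 2 (EuclideanSpace ℝ (Fin d) × ℝ)))
      = (1 / Real.sqrt (1 + (F p - F q) ^ 2 / ‖p - q‖ ^ 2)) *
          (α * F p + (1 - α) * F q - F m) := by
  intro pt m
  obtain ⟨hα0, hα1⟩ := hα
  set c : ℝ := F p - F q with hc
  set J : ℝ := α * F p + (1 - α) * F q - F m with hJ
  set N : ℝ := ‖p - q‖ ^ 2 with hNdef
  set n : ℝ := N + c ^ 2 with hn
  have hN : 0 < N := pow_pos (norm_pos_iff.mpr (sub_ne_zero.mpr hpq)) 2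
  have hnpos : 0 < n := add_pos_of_pos_of_nonneg hN (sq_nonneg c)
  have hJ0 : 0 ≤ J := by
    have hcvx := hF.2 (Set.mem_univ p) (Set.mem_univ q) (le_of_lt hα0)
      (le_of_lt (by linarith : (0:ℝ) < 1 - α)) (by ring : α + (1 - α) = 1)
    simp only [smul_eq_mul] at hcvx
    simp only [hJ, m]
    linarith [hcvx]
  set s : ℝ := -(J * c) / n with hs
  set y : WithLp 2 (EuclideanSpace ℝ (Fin d) × ℝ) :=
    pt (α • p + (1 - α) • q + s • (p - q), α * F p + (1 - α) * F q + s * c) with hy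
  have hyA : y = AffineMap.lineMap (pt (p, F p)) (pt (q, F q)) (1 - α - s) := by
    rw [AffineMap.lineMap_apply_module]
    simp only [hy, pt, WithLp.equiv_symm_apply, ← WithLp.toLp_smul, ← WithLp.toLp_add]
    congr 1
    rw [Prod.smul_mk, Prod.smul_mk, Prod.mk_add_mk]
    refine Prod.ext ?_ ?_
    · show α • p + (1 - α) • q + s • (p - q) =
        (1 - (1 - α - s)) • p + (1 - α - s) • q
      module
    · show α * F p + (1 - α) * F q + s * c =
        (1 - (1 - α - s)) • F p + (1 - α - s) • F q
      simp only [smul_eq_mul, hc]; ring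
  have hymem : y ∈ affineSpan ℝ {pt (p, F p), pt (q, F q)} := by
    rw [hyA]; exact AffineMap.lineMap_mem_affineSpan_pair _ _ _
  have hsub : pt (m, F m) - y = pt (-(s • (p - q)), -J - s * c) := by
    simp only [hy, pt, WithLp.equiv_symm_apply, ← WithLp.toLp_sub]
    congr 1
    rw [Prod.mk_sub_mk]
    refine Prod.ext ?_ ?_
    · show m - (α • p + (1 - α) • q + s • (p - q)) = -(s • (p - q))
      simp only [m]; module
    · show F m - (α * F p + (1 - α) * F q + s * c) = -J - s * c
      rw [hJ]; ring
  have hfst : ∀ z : EuclideanSpace ℝ (Fin d) × ℝ, (pt z).fst = z.1 := fun z => rfl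
  have hsnd : ∀ z : EuclideanSpace ℝ (Fin d) × ℝ, (pt z).snd = z.2 := fun z => rfl
  have hAB : pt (p, F p) - pt (q, F q) = pt (p - q, c) := by
    simp only [pt, WithLp.equiv_symm_apply, ← WithLp.toLp_sub]; rfl
  have horth : ⟪pt (m, F m) - y, pt (p, F p) - pt (q, F q)⟫ = 0 := by
    rw [hsub, hAB, WithLp.prod_inner_apply, WithLp.ofLp_fst, WithLp.ofLp_fst, WithLp.ofLp_snd,
      WithLp.ofLp_snd, hfst, hfst, hsnd, hsnd]
    simp only [inner_neg_left, real_inner_smul_left, real_inner_self_eq_norm_sq,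
      RCLike.inner_apply, conj_trivial]
    rw [← hNdef, hs]
    field_simp
    ring
  rw [infDist_affineSpan_pair_eq _ _ _ _ hymem horth, dist_eq_norm]
  have hnormsq : ‖pt (m, F m) - y‖ ^ 2 = J ^ 2 * N / n := by
    rw [hsub, WithLp.prod_norm_sq_eq_of_L2, hfst, hsnd]
    rw [norm_neg, norm_smul, Real.norm_eq_abs, mul_pow, sq_abs, ← hNdef, hs]
    simp only [Real.norm_eq_abs, sq_abs]
    field_simp
    ring
  have hR : (1 / Real.sqrt (1 + c ^ 2 / N) * J) ^ 2 = J ^ 2 * N / n := by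
    have h1 : (0:ℝ) ≤ 1 + c ^ 2 / N := by positivity
    rw [mul_pow, div_pow, one_pow, Real.sq_sqrt h1, hn]
    field_simp
  have hRnn : 0 ≤ 1 / Real.sqrt (1 + c ^ 2 / N) * J := by positivity
  calc ‖pt (m, F m) - y‖ = Real.sqrt (‖pt (m, F m) - y‖ ^ 2) :=
        (Real.sqrt_sq (norm_nonneg _)).symm
    _ = Real.sqrt ((1 / Real.sqrt (1 + c ^ 2 / N) * J) ^ 2) := by rw [hnormsq, hR]
    _ = 1 / Real.sqrt (1 + c ^ 2 / N) * J := Real.sqrt_sq hRnn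
end

section
/- For a strictly convex differentiable F : ℝ → ℝ, the intermediate point ε with ρ_J(p,q) = ρ_B(ε) is unique and given by ε = (F')^{-1}((F(p)-F(q))/(p-q)), the Stolarsky mean of p and q with respect to F'. -/
/-- For strictly convex differentiable F, the intermediate point ε with
F'(ε) equal to the chord slope (the Stolarsky mean) is unique, and at it the
Jensen and Bregman conformal factors agree. -/
theorem stolarsky_mean_unique
    (F : ℝ → ℝ) (hdiff : Differentiable ℝ F) (hF : StrictConvexOn ℝ Set.univ F)
    (p q : ℝ) (hpq : p ≠ q) :
    ∃! ε : ℝ, deriv F ε = (F p - F q) / (p - q) ∧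
      1 / Real.sqrt (1 + (deriv F ε) ^ 2)
        = 1 / Real.sqrt (1 + ((F p - F q) / (p - q)) ^ 2) := by
  have hmono : StrictMonoOn (deriv F) Set.univ :=
    hF.strictMonoOn_deriv (fun x _ => hdiff x)
  have key : ∃ c : ℝ, deriv F c = (F p - F q) / (p - q) := by
    rcases lt_or_gt_of_ne hpq with h | h
    · obtain ⟨c, _, hc⟩ := exists_deriv_eq_slope F h hdiff.continuous.continuousOn
        (fun x _ => (hdiff x).differentiableWithinAt)
      refine ⟨c, hc.trans ?_⟩
      rw [div_eq_div_iff (by linarith) (by intro h'; apply hpq; linarith)]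
      ring
    · obtain ⟨c, _, hc⟩ := exists_deriv_eq_slope F h hdiff.continuous.continuousOn
        (fun x _ => (hdiff x).differentiableWithinAt)
      exact ⟨c, hc⟩
  obtain ⟨c, hc⟩ := key
  refine ⟨c, ⟨hc, by rw [hc]⟩, ?_⟩
  rintro y ⟨hy, -⟩
  exact hmono.injOn (Set.mem_univ y) (Set.mem_univ c) (hy.trans hc.symm)
end

section
/- For the Shannon generator f(x) = x log x - x on ℝ⁺, the influence function of the symmetric Jensen centroid, z(y) = 2(f'((p+y)/2) - f'(p))/f''(p) = 2p·log((p+y)/(2p)), is unbounded as y → ∞; hence the Jensen-Shannon centroid is not robust. -/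
open Filter Topology

/-- For the Shannon generator f(x) = x log x - x, the influence function
z(y) = 2(f'((p+y)/2) - f'(p))/f''(p) = 2p log((p+y)/(2p)) is unbounded as y → ∞:
the Jensen-Shannon centroid is not robust. -/
theorem jensen_shannon_influence_unbounded (p : ℝ) (hp : 0 < p) :
    let z : ℝ → ℝ := fun y => 2 * (Real.log ((p + y) / 2) - Real.log p) / (1 / p)
    (∀ y > 0, z y = 2 * p * Real.log ((p + y) / (2 * p))) ∧
      Tendsto z atTop atTop := by
  intro z
  constructor
  · intro y hy
    have h1 : (p + y) / (2 * p) = ((p + y) / 2) / p := by ring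
    have h2 : Real.log ((p + y) / (2 * p)) = Real.log ((p + y) / 2) - Real.log p := by
      rw [h1, Real.log_div (by positivity) hp.ne']
    simp only [z, h2]
    field_simp
  · have hz : z = fun y => 2 * p * (Real.log ((p + y) / 2) - Real.log p) := by
      funext y
      simp only [z]
      field_simp
    rw [hz]
    apply Tendsto.const_mul_atTop (by positivity)
    apply Filter.tendsto_atTop_add_const_right
    exact Real.tendsto_log_atTop.comp <| (tendsto_atTop_add_const_left _ _ tendsto_id).atTop_div_const (by norm_num)
end

section
/- For the Burg generator f(x) = -log x on ℝ⁺, the influence function z(y) = 2p²(1/p - 2/(p+y)) is bounded on (0,∞): |z(y)| ≤ 2p for all y > 0, and z(y) → 2p as y → ∞; hence the Jensen-Burg centroid is robust. -/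
open Filter Topology

/-- For the Burg generator f(x) = -log x, the influence function
z(y) = 2(f'((p+y)/2) - f'(p))/f''(p) = 2p²(1/p - 2/(p+y)) is bounded by 2p and
tends to 2p as y → ∞: the Jensen-Burg centroid is robust. -/
theorem jensen_burg_influence_bounded (p : ℝ) (hp : 0 < p) :
    let z : ℝ → ℝ := fun y => 2 * ((-1 / ((p + y) / 2)) - (-1 / p)) / (1 / p ^ 2)
    (∀ y > 0, z y = 2 * p ^ 2 * (1 / p - 2 / (p + y))) ∧
      (∀ y > 0, |z y| ≤ 2 * p) ∧
      Tendsto z atTop (𝓝 (2 * p)) := by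
  intro z
  have hform : ∀ y : ℝ, 0 < y → z y = 2 * p - 4 * p ^ 2 / (p + y) := by
    intro y hy
    have hpy : p + y ≠ 0 := by positivity
    have hp' : p ≠ 0 := hp.ne'
    simp only [z]
    field_simp
    ring
  refine ⟨?_, ?_, ?_⟩
  · intro y hy
    rw [hform y hy]
    have hpy : p + y ≠ 0 := by positivity
    field_simp
    ring
  · intro y hy
    rw [hform y hy]
    have hpy : (0:ℝ) < p + y := by positivity
    rw [abs_le]
    constructor
    · have h1 : 4 * p ^ 2 / (p + y) < 4 * p ^ 2 / p := by
        apply div_lt_div_of_pos_left (by positivity) hp (by linarith)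
      have h2 : 4 * p ^ 2 / p = 4 * p := by field_simp
      nlinarith
    · have h3 : 0 < 4 * p ^ 2 / (p + y) := by positivity
      linarith
  · have h : Tendsto (fun y : ℝ => 2 * p - 4 * p ^ 2 / (p + y)) atTop (𝓝 (2 * p)) := by
      have : Tendsto (fun y : ℝ => 4 * p ^ 2 / (p + y)) atTop (𝓝 0) := by
        apply Tendsto.div_atTop tendsto_const_nhds
        exact tendsto_atTop_add_const_left _ _ tendsto_id
      simpa using tendsto_const_nhds.sub this
    refine h.congr' ?_
    filter_upwards [eventually_gt_atTop 0] with y hy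
    exact (hform y hy).symm
end

section
/- For the Shannon generator, the total Jensen conformal factor satisfies ρ_J(p,y)·log y → 1 as y → ∞ (for fixed p > 0), i.e., ρ_J(p,y) ~ 1/log y. -/
open Filter Topology

/-- For the Shannon generator, the total Jensen conformal factor satisfies
ρ_J(p,y) · log y → 1 as y → ∞, i.e. ρ_J(p,y) ~ 1/log y. -/
theorem shannon_conformal_factor_asymptotics (p : ℝ) (hp : 0 < p) :
    Tendsto
      (fun y : ℝ =>
        (1 / Real.sqrt (1 +
          ((p * Real.log p - p - y * Real.log y + y) / (p - y)) ^ 2)) * Real.log y)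
      atTop (𝓝 1) := by
  set C : ℝ := p * Real.log p - p with hC
  set s : ℝ → ℝ := fun y => (C - y * Real.log y + y) / (p - y) with hs
  set t : ℝ → ℝ := fun y => s y / Real.log y with htdef
  have hlog : Tendsto Real.log atTop atTop := Real.tendsto_log_atTop
  -- t tends to 1
  have ht : Tendsto t atTop (𝓝 1) := by
    have h1 : Tendsto (fun y : ℝ => y * Real.log y) atTop atTop :=
      Tendsto.atTop_mul_atTop₀ tendsto_id hlog
    have h2 : Tendsto (fun y : ℝ => C / (y * Real.log y)) atTop (𝓝 0) :=
      Tendsto.div_atTop tendsto_const_nhds h1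
    have h3 : Tendsto (fun y : ℝ => 1 / Real.log y) atTop (𝓝 0) :=
      Tendsto.div_atTop tendsto_const_nhds hlog
    have h4 : Tendsto (fun y : ℝ => p / y) atTop (𝓝 0) :=
      Tendsto.div_atTop tendsto_const_nhds tendsto_id
    have hnum : Tendsto (fun y : ℝ => C / (y * Real.log y) - 1 + 1 / Real.log y)
        atTop (𝓝 (-1)) := by
      have := (h2.sub (tendsto_const_nhds (x := (1:ℝ)))).add h3
      simpa using this
    have hden : Tendsto (fun y : ℝ => p / y - 1) atTop (𝓝 (-1)) := by
      have := h4.sub (tendsto_const_nhds (x := (1:ℝ)))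
      simpa using this
    have hratio := hnum.div hden (by norm_num)
    have hval : (-1 : ℝ) / (-1 : ℝ) = 1 := by norm_num
    rw [hval] at hratio
    refine hratio.congr' ?_
    filter_upwards [eventually_gt_atTop (max p 1)] with y hy
    have hy1 : (1 : ℝ) < y := lt_of_le_of_lt (le_max_right p 1) hy
    have hyp : p < y := lt_of_le_of_lt (le_max_left p 1) hy
    have hy0 : y ≠ 0 := by positivity
    have hlogy : 0 < Real.log y := Real.log_pos hy1
    have hlogy0 : Real.log y ≠ 0 := ne_of_gt hlogy
    have hpy : p - y ≠ 0 := by intro h; exact absurd (by linarith : p = y) (ne_of_lt hyp)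
    simp only [htdef, hs, Pi.div_apply]
    field_simp
  -- main computation
  have h3 : Tendsto (fun y : ℝ => 1 / Real.log y) atTop (𝓝 0) :=
    Tendsto.div_atTop tendsto_const_nhds hlog
  have hin : Tendsto (fun y : ℝ => (1 / Real.log y) ^ 2 + (t y) ^ 2) atTop (𝓝 1) := by
    have := (h3.pow 2).add (ht.pow 2)
    simpa using this
  have hsqrt : Tendsto (fun y : ℝ => Real.sqrt ((1 / Real.log y) ^ 2 + (t y) ^ 2))
      atTop (𝓝 1) := by
    have := (Real.continuous_sqrt.continuousAt (x := (1:ℝ))).tendsto.comp hin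
    simpa [Real.sqrt_one, Function.comp_def] using this
  have hfinal : Tendsto (fun y : ℝ => 1 / Real.sqrt ((1 / Real.log y) ^ 2 + (t y) ^ 2))
      atTop (𝓝 1) := by
    have := hsqrt.inv₀ one_ne_zero
    simpa [one_div] using this
  refine hfinal.congr' ?_
  filter_upwards [eventually_gt_atTop (max p 1)] with y hy
  have hy1 : (1 : ℝ) < y := lt_of_le_of_lt (le_max_right p 1) hy
  have hlogy : 0 < Real.log y := Real.log_pos hy1
  have hlogy0 : Real.log y ≠ 0 := ne_of_gt hlogy
  have hsq : (1 / Real.log y) ^ 2 + (t y) ^ 2 = (1 + (s y) ^ 2) / (Real.log y) ^ 2 := by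
    simp only [htdef]
    field_simp
  have hpos : (0:ℝ) ≤ 1 + (s y) ^ 2 := by positivity
  have : Real.sqrt ((1 / Real.log y) ^ 2 + (t y) ^ 2)
      = Real.sqrt (1 + (s y) ^ 2) / Real.log y := by
    rw [hsq, Real.sqrt_div hpos, Real.sqrt_sq hlogy.le]
  rw [this, one_div_div]
  have hspos : 0 < Real.sqrt (1 + (s y) ^ 2) :=
    Real.sqrt_pos.mpr (by positivity)
  simp only [hs, hC]
  field_simp
end
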